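/- For any finite simple graph H and m,n ≥ 1, π(K_{m,n} ∘ H) = π(H) + min{m,n}·|V(H)|. -/

import Mathlib

/-- A list is a repetition if it is of the form `w ++ w` for a nonempty `w`. -/
def IsRepetition {α : Type*} (l : List α) : Prop := ∃ w : List α, w ≠ [] ∧ l = w ++ w

/-- A list is non-repetitive if no block of consecutive elements is a repetition. -/
def NonRepetitive {α : Type*} (l : List α) : Prop :=
  ∀ t : List α, t <:+: l → ¬ IsRepetition t

/-- A vertex colouring is non-repetitive if the colour sequence of every path
is not a repetition. -/
def NonRepColoring {V β : Type*} (G : SimpleGraph V) (φ : V → β) : Prop :=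
  ∀ ⦃u v : V⦄ (p : G.Walk u v), p.IsPath → ¬ IsRepetition (p.support.map φ)

/-- The Thue chromatic number: minimum number of colours of a non-repetitive colouring. -/
noncomputable def thueNumber {V : Type*} [Fintype V] (G : SimpleGraph V) : ℕ :=
  sInf {k | ∃ φ : V → Fin k, NonRepColoring G φ}

/-- The Thue choice number: least `k` such that from any lists of size at least `k`
one can choose a non-repetitive colouring. -/
noncomputable def thueChoiceNumber {V : Type*} [Fintype V] (G : SimpleGraph V) : ℕ :=
  sInf {k | ∀ L : V → Finset ℕ, (∀ v, k ≤ (L v).card) →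
    ∃ φ : V → ℕ, (∀ v, φ v ∈ L v) ∧ NonRepColoring G φ}

/-- The independence number of a graph. -/
noncomputable def indepNum {V : Type*} [Fintype V] (G : SimpleGraph V) : ℕ :=
  sSup {n | ∃ s : Finset V, (∀ a ∈ s, ∀ b ∈ s, ¬ G.Adj a b) ∧ s.card = n}

/-- The lexicographic product of two simple graphs. -/
def lexProd {V W : Type*} (G : SimpleGraph V) (H : SimpleGraph W) : SimpleGraph (V × W) where
  Adj x y := G.Adj x.1 y.1 ∨ (x.1 = y.1 ∧ H.Adj x.2 y.2)
  symm := by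
    constructor
    rintro x y (h | ⟨h1, h2⟩)
    · exact Or.inl h.symm
    · exact Or.inr ⟨h1.symm, h2.symm⟩
  loopless := by
    constructor
    rintro x (h | ⟨h1, h2⟩)
    · exact G.loopless.irrefl _ h
    · exact H.loopless.irrefl _ h2

open SimpleGraph Function

theorem isRepetition_map {α β : Type*} {l : List α} (g : α → β) (h : IsRepetition l) :
    IsRepetition (l.map g) := by
  obtain ⟨w, hw, rfl⟩ := h
  exact ⟨w.map g, by simpa using hw, by simp⟩

theorem isRepetition_of_map {α β : Type*} {l : List α} {g : α → β}
    (hg : Function.Injective g) (h : IsRepetition (l.map g)) : IsRepetition l := by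
  obtain ⟨w, hw, hl⟩ := h
  have hlen : l.length = w.length + w.length := by simpa using congrArg List.length hl
  have h1 : (l.take w.length).map g = w := by
    rw [List.map_take, hl, List.take_left]
  have h2 : (l.drop w.length).map g = w := by
    rw [List.map_drop, hl, List.drop_left]
  have h3 : l.take w.length = l.drop w.length :=
    List.map_injective_iff.mpr hg (h1.trans h2.symm)
  refine ⟨l.take w.length, ?_, ?_⟩
  · intro h0
    rw [h0] at h1
    exact hw (by simpa using h1.symm)
  · conv_lhs => rw [← List.take_append_drop w.length l]
    rw [h3]

theorem nonRep_comp {V α β : Type*} {G : SimpleGraph V} {φ : V → α} {g : α → β}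
    (hg : Function.Injective g) (h : NonRepColoring G φ) : NonRepColoring G (g ∘ φ) := by
  intro u v p hp hr
  exact h p hp (isRepetition_of_map hg (by simpa [List.map_map] using hr))

theorem nonRep_of_comp {V α β : Type*} {G : SimpleGraph V} {φ : V → α} {g : α → β}
    (h : NonRepColoring G (g ∘ φ)) : NonRepColoring G φ := by
  intro u v p hp hr
  exact h p hp (by simpa [List.map_map] using isRepetition_map g hr)

theorem nonRep_of_injective {V β : Type*} {G : SimpleGraph V} {φ : V → β}
    (hφ : Function.Injective φ) : NonRepColoring G φ := by
  intro u v p hp ⟨w, hw, hl⟩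
  have hnd : (p.support.map φ).Nodup := hp.support_nodup.map hφ
  rw [hl] at hnd
  obtain ⟨a, ha⟩ := List.exists_mem_of_ne_nil w hw
  exact (List.disjoint_of_nodup_append hnd) ha ha
theorem thue_set_nonempty {V : Type*} [Fintype V] (G : SimpleGraph V) :
    {k | ∃ φ : V → Fin k, NonRepColoring G φ}.Nonempty :=
  ⟨Fintype.card V, Fintype.equivFin V, nonRep_of_injective (Fintype.equivFin V).injective⟩

theorem adj_ne_colour {V β : Type*} {G : SimpleGraph V} {φ : V → β}
    (h : NonRepColoring G φ) {u v : V} (huv : G.Adj u v) : φ u ≠ φ v := by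
  intro he
  refine h (Walk.cons huv Walk.nil) (by simp [Walk.isPath_def, G.ne_of_adj huv]) ?_
  exact ⟨[φ u], by simp, by simp [he]⟩

theorem walk_lift {V W : Type*} {G : SimpleGraph V} {H : SimpleGraph W} (b : V) :
    ∀ {x y : W} (q : H.Walk x y),
      ∃ p : (lexProd G H).Walk (b, x) (b, y),
        p.support = q.support.map (fun w => (b, w)) := by
  intro x y q
  induction q with
  | nil => exact ⟨Walk.nil, by simp⟩
  | @cons a c d h q ih =>
    obtain ⟨p, hp⟩ := ih
    have hadj : (lexProd G H).Adj (b, a) (b, c) := Or.inr ⟨rfl, h⟩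
    exact ⟨Walk.cons hadj p, by simp [hp]⟩

theorem copy_nonrep {V W β : Type*} {G : SimpleGraph V} {H : SimpleGraph W}
    {ψ : V × W → β} (hψ : NonRepColoring (lexProd G H) ψ) (b : V) :
    NonRepColoring H (fun w => ψ (b, w)) := by
  intro x y q hq hr
  obtain ⟨p, hp⟩ := walk_lift b q
  have hinj : Function.Injective (fun w : W => (b, w)) := fun a c h => by
    simpa using congrArg Prod.snd h
  refine hψ p ?_ ?_
  · rw [Walk.isPath_def, hp]
    exact hq.support_nodup.map hinj
  · rw [hp, List.map_map]
    exact hr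

theorem walk_fst_const {A B W : Type*} {H : SimpleGraph W}
    {u v : (A ⊕ B) × W} (p : (lexProd (completeBipartiteGraph A B) H).Walk u v)
    (h : ∀ x ∈ p.support, (x.1).isRight) : ∀ x ∈ p.support, x.1 = u.1 := by
  induction p with
  | nil => intro x hx; simp at hx; rw [hx]
  | @cons u c v hadj p ih =>
    have hu : (u.1).isRight := h u (by simp)
    have hc : (c.1).isRight := h c (by simp)
    have huc : u.1 = c.1 := by
      rcases hadj with hG | ⟨he, _⟩
      · exfalso
        rcases hG with ⟨h1, _⟩ | ⟨_, h2⟩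
        · simp [Sum.isLeft_iff] at h1
          obtain ⟨a, ha⟩ := h1
          rw [ha] at hu; simp at hu
        · simp [Sum.isLeft_iff] at h2
          obtain ⟨a, ha⟩ := h2
          rw [ha] at hc; simp at hc
      · exact he
    intro x hx
    rw [Walk.support_cons] at hx
    rcases List.mem_cons.mp hx with rfl | hx
    · rfl
    · rw [ih (fun z hz => h z (by simp [Walk.support_cons, hz])) x hx, ← huc]

theorem walk_proj {V W : Type*} {G : SimpleGraph V} {H : SimpleGraph W} :
    ∀ {u v : V × W} (p : (lexProd G H).Walk u v),
      (∀ x ∈ p.support, x.1 = u.1) →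
      ∃ q : H.Walk u.2 v.2, q.support = p.support.map Prod.snd := by
  intro u v p
  induction p with
  | nil => exact fun _ => ⟨Walk.nil, by simp⟩
  | @cons u c v hadj p ih =>
    intro h
    have hc : c.1 = u.1 := h c (by simp)
    have hH : H.Adj u.2 c.2 := by
      rcases hadj with hG | ⟨_, h2⟩
      · rw [hc] at hG; exact absurd hG (G.irrefl)
      · exact h2
    obtain ⟨q, hq⟩ := ih (fun z hz => (h z (by simp [Walk.support_cons, hz])).trans hc.symm)
    exact ⟨Walk.cons hH q, by simp [hq]⟩

theorem nonRep_of_iso {V V' β : Type*} {G : SimpleGraph V} {G' : SimpleGraph V'}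
    (e : G ≃g G') {φ : V' → β} (hφ : NonRepColoring G' φ) :
    NonRepColoring G (φ ∘ e) := by
  intro u v p hp hr
  refine hφ (p.map e.toHom) (Walk.map_isPath_of_injective e.injective hp) ?_
  rw [Walk.support_map, List.map_map]
  exact hr

theorem thueNumber_le_of_iso {V V' : Type*} [Fintype V] [Fintype V']
    {G : SimpleGraph V} {G' : SimpleGraph V'} (e : G ≃g G') :
    thueNumber G ≤ thueNumber G' := by
  obtain ⟨φ, hφ⟩ := Nat.sInf_mem (thue_set_nonempty G')
  exact Nat.sInf_le ⟨φ ∘ e, nonRep_of_iso e hφ⟩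

theorem thueNumber_eq_of_iso {V V' : Type*} [Fintype V] [Fintype V']
    {G : SimpleGraph V} {G' : SimpleGraph V'} (e : G ≃g G') :
    thueNumber G = thueNumber G' :=
  le_antisymm (thueNumber_le_of_iso e) (thueNumber_le_of_iso e.symm)

def lexProdIso {V V' W : Type*} {G : SimpleGraph V} {G' : SimpleGraph V'}
    (e : G ≃g G') (H : SimpleGraph W) : lexProd G H ≃g lexProd G' H where
  toEquiv := Equiv.prodCongr e.toEquiv (Equiv.refl W)
  map_rel_iff' := by
    intro x y
    show (lexProd G' H).Adj (e x.1, x.2) (e y.1, y.2) ↔ (lexProd G H).Adj x y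
    constructor
    · rintro (h | ⟨h1, h2⟩)
      · exact Or.inl (e.map_adj_iff.mp h)
      · exact Or.inr ⟨e.injective h1, h2⟩
    · rintro (h | ⟨h1, h2⟩)
      · exact Or.inl (e.map_adj_iff.mpr h)
      · exact Or.inr ⟨congrArg e h1, h2⟩

def bipartiteComm (A B : Type*) : completeBipartiteGraph A B ≃g completeBipartiteGraph B A where
  toEquiv := Equiv.sumComm A B
  map_rel_iff' := by
    rintro (a | a) (b | b) <;> simp [completeBipartiteGraph, Equiv.sumComm]

theorem aux_upper {A B W : Type*} [Fintype A] [Fintype B] [Fintype W] (H : SimpleGraph W) :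
    thueNumber (lexProd (completeBipartiteGraph A B) H) ≤
      thueNumber H + Fintype.card A * Fintype.card W := by
  classical
  obtain ⟨φ0, hφ0⟩ : ∃ φ : W → Fin (thueNumber H), NonRepColoring H φ :=
    Nat.sInf_mem (thue_set_nonempty H)
  have hcard : Fintype.card (A × W) = Fintype.card A * Fintype.card W := by
    simp [Fintype.card_prod]
  let eAW : A × W ≃ Fin (Fintype.card A * Fintype.card W) :=
    (Fintype.equivFin (A × W)).trans (finCongr hcard)
  let χ : (A ⊕ B) × W → Fin (thueNumber H + Fintype.card A * Fintype.card W) := fun x =>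
    match x with
    | (Sum.inl a, w) => ⟨thueNumber H + (eAW (a, w)).val, Nat.add_lt_add_left (eAW (a, w)).isLt (thueNumber H)⟩
    | (Sum.inr _, w) => Fin.castLE (Nat.le_add_right (thueNumber H) _) (φ0 w)
  refine Nat.sInf_le ⟨χ, ?_⟩
  rintro u v p hp ⟨wl, hwne, hweq⟩
  -- colour determines left vertices
  have F2 : ∀ (a : A) (w : W) (y : (A ⊕ B) × W),
      χ (Sum.inl a, w) = χ y → y = (Sum.inl a, w) := by
    rintro a w ⟨(a' | b'), w'⟩ hy
    · have : thueNumber H + (eAW (a, w)).val = thueNumber H + (eAW (a', w')).val := congrArg Fin.val hy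
      have : eAW (a, w) = eAW (a', w') := Fin.val_injective (by omega)
      have := eAW.injective this
      simp only [Prod.mk.injEq] at this
      simp [this.1, this.2]
    · exfalso
      have hval : thueNumber H + (eAW (a, w)).val = (φ0 w').val := congrArg Fin.val hy
      have := (φ0 w').isLt
      omega
  set s := p.support with hsdef
  set t := wl.length with htdef
  have hs : s.map χ = wl ++ wl := hweq
  have h1 : (s.take t).map χ = wl := by rw [List.map_take, hs, List.take_left]
  have h2 : (s.drop t).map χ = wl := by rw [List.map_drop, hs, List.drop_left]
  have hnd : (s.take t ++ s.drop t).Nodup := by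
    rw [List.take_append_drop]; exact hp.support_nodup
  have hdisj := List.disjoint_of_nodup_append hnd
  -- Claim A : every support vertex is on the right side
  have claimA : ∀ x ∈ s, (x.1).isRight := by
    intro x hx
    rcases hx1 : x.1 with a | b
    · exfalso
      obtain ⟨a, w, rfl⟩ : ∃ a' w', x = (Sum.inl a', w') := by
        obtain ⟨x1, x2⟩ := x
        exact ⟨a, x2, by simp at hx1; rw [hx1]⟩
      rw [← List.take_append_drop t s] at hx
      rcases List.mem_append.mp hx with hmem | hmem
      · have hcol : χ (Sum.inl a, w) ∈ (s.drop t).map χ := by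
          rw [h2, ← h1]; exact List.mem_map_of_mem (f := χ) hmem
        obtain ⟨y, hy, hyx⟩ := List.mem_map.mp hcol
        rw [F2 a w y hyx.symm] at hy
        exact hdisj hmem hy
      · have hcol : χ (Sum.inl a, w) ∈ (s.take t).map χ := by
          rw [h1, ← h2]; exact List.mem_map_of_mem (f := χ) hmem
        obtain ⟨y, hy, hyx⟩ := List.mem_map.mp hcol
        rw [F2 a w y hyx.symm] at hy
        exact hdisj hy hmem
    · rfl
  have hconst := walk_fst_const p claimA
  obtain ⟨q, hq⟩ := walk_proj p hconst
  have hqpath : q.IsPath := by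
    rw [Walk.isPath_def, hq]
    refine hp.support_nodup.map_on ?_
    intro x hx y hy hxy
    have := (hconst x hx).trans (hconst y hy).symm
    exact Prod.ext this hxy
  refine hφ0 q hqpath ?_
  have hmapeq : s.map χ = (q.support.map φ0).map (Fin.castLE (Nat.le_add_right (thueNumber H) _)) := by
    rw [hq, List.map_map, List.map_map]
    refine List.map_congr_left ?_
    intro x hx
    obtain ⟨b, hb⟩ := Sum.isRight_iff.mp (claimA x hx)
    obtain ⟨x1, x2⟩ := x
    simp only at hb
    rw [hb]
    rfl
  have hrep : IsRepetition ((q.support.map φ0).map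
      (Fin.castLE (Nat.le_add_right (thueNumber H) (Fintype.card A * Fintype.card W)))) := by
    rw [← hmapeq, hs]
    exact ⟨wl, hwne, rfl⟩
  exact isRepetition_of_map (Fin.castLE_injective _) hrep

theorem dichotomy {A B W β : Type*} {H : SimpleGraph W}
    {ψ : (A ⊕ B) × W → β}
    (hψ : NonRepColoring (lexProd (completeBipartiteGraph A B) H) ψ) :
    Function.Injective (fun p : A × W => ψ (Sum.inl p.1, p.2)) ∨
    Function.Injective (fun p : B × W => ψ (Sum.inr p.1, p.2)) := by
  by_contra hcon
  push_neg at hcon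
  obtain ⟨hL, hR⟩ := hcon
  obtain ⟨pa, pa', hea, hna⟩ := Function.not_injective_iff.mp hL
  obtain ⟨pb, pb', heb, hnb⟩ := Function.not_injective_iff.mp hR
  set u : (A ⊕ B) × W := (Sum.inl pa.1, pa.2) with hu
  set u' : (A ⊕ B) × W := (Sum.inl pa'.1, pa'.2) with hu'
  set v : (A ⊕ B) × W := (Sum.inr pb.1, pb.2) with hv
  set v' : (A ⊕ B) × W := (Sum.inr pb'.1, pb'.2) with hv'
  have h1 : (lexProd (completeBipartiteGraph A B) H).Adj u v := Or.inl (Or.inl ⟨rfl, rfl⟩)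
  have h2 : (lexProd (completeBipartiteGraph A B) H).Adj v u' := Or.inl (Or.inr ⟨rfl, rfl⟩)
  have h3 : (lexProd (completeBipartiteGraph A B) H).Adj u' v' := Or.inl (Or.inl ⟨rfl, rfl⟩)
  have huu' : u ≠ u' := by
    intro h
    rw [hu, hu'] at h
    apply hna
    have h1 := congrArg Prod.fst h
    have h2 := congrArg Prod.snd h
    simp only [Sum.inl.injEq] at h1
    exact Prod.ext h1 h2
  have hvv' : v ≠ v' := by
    intro h
    rw [hv, hv'] at h
    apply hnb
    have h1 := congrArg Prod.fst h
    have h2 := congrArg Prod.snd h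
    simp only [Sum.inr.injEq] at h1
    exact Prod.ext h1 h2
  have hcross : ∀ (x : A × W) (y : B × W),
      ((Sum.inl x.1, x.2) : (A ⊕ B) × W) ≠ (Sum.inr y.1, y.2) := by
    intro x y h
    simpa using congrArg Prod.fst h
  let wlk : (lexProd (completeBipartiteGraph A B) H).Walk u v' :=
    Walk.cons h1 (Walk.cons h2 (Walk.cons h3 Walk.nil))
  have hpath : wlk.IsPath := by
    rw [Walk.isPath_def]
    show List.Nodup [u, v, u', v']
    simp only [List.nodup_cons, List.mem_cons, List.not_mem_nil, List.mem_singleton,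
      List.nodup_nil, and_true, not_or, not_false_eq_true]
    refine ⟨⟨hcross pa pb, huu', hcross pa pb'⟩, ⟨(hcross pa' pb).symm, hvv'⟩, hcross pa' pb'⟩
  refine hψ wlk hpath ⟨[ψ u, ψ v], by simp, ?_⟩
  show [ψ u, ψ v, ψ u', ψ v'] = [ψ u, ψ v] ++ [ψ u, ψ v]
  have e1 : ψ u = ψ u' := hea
  have e2 : ψ v = ψ v' := heb
  rw [← e1, ← e2]
  rfl

theorem aux_lower {A B W : Type*} [Fintype A] [Fintype B] [Fintype W] [Nonempty B]
    (H : SimpleGraph W) {k : ℕ} {ψ : (A ⊕ B) × W → Fin k}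
    (hψ : NonRepColoring (lexProd (completeBipartiteGraph A B) H) ψ)
    (hrain : Function.Injective (fun p : A × W => ψ (Sum.inl p.1, p.2))) :
    thueNumber H + Fintype.card A * Fintype.card W ≤ k := by
  classical
  obtain ⟨b⟩ := ‹Nonempty B›
  have hφ : NonRepColoring H (fun w => ψ (Sum.inr b, w)) := copy_nonrep hψ (Sum.inr b)
  set φ : W → Fin k := fun w => ψ (Sum.inr b, w) with hφdef
  set R : Finset (Fin k) :=
    Finset.image (fun p : A × W => ψ (Sum.inl p.1, p.2)) Finset.univ with hRdef
  have hRcard : R.card = Fintype.card A * Fintype.card W := by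
    rw [hRdef, Finset.card_image_of_injective _ hrain, Finset.card_univ, Fintype.card_prod]
  have hnotin : ∀ w, φ w ∉ R := by
    intro w hw
    obtain ⟨p, _, hpw⟩ := Finset.mem_image.mp hw
    have hadj : (lexProd (completeBipartiteGraph A B) H).Adj (Sum.inl p.1, p.2) (Sum.inr b, w) :=
      Or.inl (Or.inl ⟨rfl, rfl⟩)
    exact adj_ne_colour hψ hadj hpw
  set T : Finset (Fin k) := Finset.univ \ R with hTdef
  have hTcard : T.card = k - Fintype.card A * Fintype.card W := by
    rw [hTdef, Finset.card_sdiff_of_subset (Finset.subset_univ R), Finset.card_univ,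
      Fintype.card_fin, hRcard]
  have hRk : Fintype.card A * Fintype.card W ≤ k := by
    have := Finset.card_le_univ R
    rwa [hRcard, Fintype.card_fin] at this
  have hmemT : ∀ w, φ w ∈ T := by
    intro w
    rw [hTdef, Finset.mem_sdiff]
    exact ⟨Finset.mem_univ _, hnotin w⟩
  set φ'' : W → {x // x ∈ T} := fun w => ⟨φ w, hmemT w⟩ with hφ''def
  have hφ'' : NonRepColoring H φ'' := by
    refine nonRep_of_comp (g := Subtype.val) ?_
    exact hφ
  set g : {x // x ∈ T} → Fin (k - Fintype.card A * Fintype.card W) :=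
    fun x => Fin.cast hTcard (T.equivFin x) with hgdef
  have hg : Function.Injective g := by
    intro x y hxy
    apply T.equivFin.injective
    exact Fin.cast_injective _ hxy
  have hπ : thueNumber H ≤ k - Fintype.card A * Fintype.card W :=
    Nat.sInf_le ⟨g ∘ φ'', nonRep_comp hg hφ''⟩
  omega

/-- `π(K_{m,n} ∘ H) = π(H) + min{m,n}·|V(H)|`. -/
theorem thueNumber_lexProd_completeBipartite {W : Type*} [Fintype W] (H : SimpleGraph W)
    (m n : ℕ) (hm : 1 ≤ m) (hn : 1 ≤ n) :
    thueNumber (lexProd (completeBipartiteGraph (Fin m) (Fin n)) H) =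
      thueNumber H + min m n * Fintype.card W := by
  classical
  have hNm : Nonempty (Fin m) := ⟨⟨0, hm⟩⟩
  have hNn : Nonempty (Fin n) := ⟨⟨0, hn⟩⟩
  have hiso : thueNumber (lexProd (completeBipartiteGraph (Fin m) (Fin n)) H)
      = thueNumber (lexProd (completeBipartiteGraph (Fin n) (Fin m)) H) :=
    thueNumber_eq_of_iso (lexProdIso (bipartiteComm (Fin m) (Fin n)) H)
  refine le_antisymm ?_ ?_
  · have h1 := aux_upper (A := Fin m) (B := Fin n) H
    have h2 := aux_upper (A := Fin n) (B := Fin m) H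
    rw [← hiso] at h2
    rw [Fintype.card_fin] at h1 h2
    rcases le_total m n with h | h
    · rw [min_eq_left h]; exact h1
    · rw [min_eq_right h]; exact h2
  · refine le_csInf (thue_set_nonempty _) ?_
    rintro k ⟨ψ, hψ⟩
    rcases dichotomy hψ with hrain | hrain
    · have hlow := aux_lower (A := Fin m) (B := Fin n) H hψ hrain
      rw [Fintype.card_fin] at hlow
      have hmin : min m n * Fintype.card W ≤ m * Fintype.card W :=
        Nat.mul_le_mul_right _ (min_le_left m n)
      omega
    · have hψ' : NonRepColoring (lexProd (completeBipartiteGraph (Fin n) (Fin m)) H)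
          (ψ ∘ (lexProdIso (bipartiteComm (Fin n) (Fin m)) H)) :=
        nonRep_of_iso (lexProdIso (bipartiteComm (Fin n) (Fin m)) H) hψ
      have hrain' : Function.Injective (fun p : Fin n × W =>
          (ψ ∘ (lexProdIso (bipartiteComm (Fin n) (Fin m)) H)) (Sum.inl p.1, p.2)) := hrain
      have hlow := aux_lower (A := Fin n) (B := Fin m) H hψ' hrain'
      rw [Fintype.card_fin] at hlow
      have hmin : min m n * Fintype.card W ≤ n * Fintype.card W :=
        Nat.mul_le_mul_right _ (min_le_right m n)
      omega
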